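/- Let Ω_{a,ε} = (−a,a) × (−ε,ε) ⊂ ℝ² and suppose u ∈ [H²₀(Ω_{a,ε})]² satisfies div u = x₁ on Ω_{a,ε}. Then ∫_{Ω_{a,ε}} x₁² dx = −½ ∫_{Ω_{a,ε}} x₂² ∂²_{x₂x₂} u₁ dx, and hence ‖x₁‖²_{0,Ω_{a,ε}} ≤ ½ ‖x₂²‖_{0,Ω_{a,ε}} ‖∂²_{x₂x₂} u₁‖_{0,Ω_{a,ε}}. -/

import Mathlib

open MeasureTheory

lemma statement11_aux (a ε : ℝ) (ha : 0 < a) (hε : 0 < ε) (f₁ f₂ : ℝ × ℝ → ℝ)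
    (hf₁ : ContDiff ℝ 2 f₁) (hf₂ : ContDiff ℝ 2 f₂)
    (hs₁ : tsupport f₁ ⊆ Set.Ioo (-a) a ×ˢ Set.Ioo (-ε) ε)
    (hs₂ : tsupport f₂ ⊆ Set.Ioo (-a) a ×ˢ Set.Ioo (-ε) ε)
    (hdiv : ∀ p ∈ (Set.Ioo (-a) a ×ˢ Set.Ioo (-ε) ε : Set (ℝ × ℝ)),
      fderiv ℝ f₁ p ((1 : ℝ), (0 : ℝ)) + fderiv ℝ f₂ p ((0 : ℝ), (1 : ℝ)) = p.1) :
    (∫ p in (Set.Ioo (-a) a ×ˢ Set.Ioo (-ε) ε : Set (ℝ × ℝ)), p.1^2)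
      = -(1/2) * ∫ p in (Set.Ioo (-a) a ×ˢ Set.Ioo (-ε) ε : Set (ℝ × ℝ)),
          p.2^2 * fderiv ℝ (fun q => fderiv ℝ f₁ q ((0:ℝ),(1:ℝ))) p ((0:ℝ),(1:ℝ))
    ∧ (∫ p in (Set.Ioo (-a) a ×ˢ Set.Ioo (-ε) ε : Set (ℝ × ℝ)), p.1^2)
      ≤ (1/2) * Real.sqrt (∫ p in (Set.Ioo (-a) a ×ˢ Set.Ioo (-ε) ε : Set (ℝ × ℝ)), (p.2^2)^2)
          * Real.sqrt (∫ p in (Set.Ioo (-a) a ×ˢ Set.Ioo (-ε) ε : Set (ℝ × ℝ)),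
              (fderiv ℝ (fun q => fderiv ℝ f₁ q ((0:ℝ),(1:ℝ))) p ((0:ℝ),(1:ℝ)))^2) := by
  set s : Set ℝ := Set.Ioo (-a) a with hs_def
  set t : Set ℝ := Set.Ioo (-ε) ε with ht_def
  set Ω : Set (ℝ × ℝ) := s ×ˢ t with hΩ_def
  set g : ℝ × ℝ → ℝ := fun q => fderiv ℝ f₁ q ((0:ℝ),(1:ℝ)) with hg_def
  set D : ℝ × ℝ → ℝ := fun p => fderiv ℝ g p ((0:ℝ),(1:ℝ)) with hD_def
  set d₁ : ℝ × ℝ → ℝ := fun p => fderiv ℝ f₁ p ((1:ℝ),(0:ℝ)) with hd₁_def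
  set d₂ : ℝ × ℝ → ℝ := fun p => fderiv ℝ f₂ p ((0:ℝ),(1:ℝ)) with hd₂_def
  have hΩmeas : MeasurableSet Ω := measurableSet_Ioo.prod measurableSet_Ioo
  -- regularity
  have hdf₁ : Differentiable ℝ f₁ := hf₁.differentiable two_ne_zero
  have hdf₂ : Differentiable ℝ f₂ := hf₂.differentiable two_ne_zero
  have hgC1 : ContDiff ℝ 1 g :=
    (hf₁.fderiv_right (m := 1) (by norm_num)).clm_apply contDiff_const
  have hdg : Differentiable ℝ g := hgC1.differentiable one_ne_zero
  have hcont_g : Continuous g := hgC1.continuous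
  have hcont_D : Continuous D :=
    ((hgC1.fderiv_right (m := 0) (by norm_num)).clm_apply contDiff_const).continuous
  have hcont_d₁ : Continuous d₁ :=
    ((hf₁.fderiv_right (m := 1) (by norm_num)).clm_apply contDiff_const).continuous
  have hcont_d₂ : Continuous d₂ :=
    ((hf₂.fderiv_right (m := 1) (by norm_num)).clm_apply contDiff_const).continuous
  -- support facts
  have hgsupp : Function.support g ⊆ tsupport f₁ := fun p hp => by
    apply support_fderiv_subset ℝ (f := f₁)
    simp only [Function.mem_support] at hp ⊢
    intro h0
    apply hp
    rw [hg_def]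
    simp only [h0, ContinuousLinearMap.zero_apply]
  have hDsupp : Function.support D ⊆ tsupport f₁ := fun p hp => by
    have h1 : p ∈ Function.support (fderiv ℝ g) := by
      simp only [Function.mem_support] at hp ⊢
      intro h0
      apply hp
      rw [hD_def]
      simp only [h0, ContinuousLinearMap.zero_apply]
    have h2 : p ∈ tsupport g := support_fderiv_subset ℝ h1
    exact closure_minimal hgsupp (isClosed_tsupport f₁) h2
  -- zero values outside Ω
  have hf₁z : ∀ p : ℝ × ℝ, p ∉ Ω → f₁ p = 0 := fun p hp =>
    image_eq_zero_of_notMem_tsupport fun h => hp (hs₁ h)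
  have hf₂z : ∀ p : ℝ × ℝ, p ∉ Ω → f₂ p = 0 := fun p hp =>
    image_eq_zero_of_notMem_tsupport fun h => hp (hs₂ h)
  have hgz : ∀ p : ℝ × ℝ, p ∉ Ω → g p = 0 := fun p hp => by
    by_contra h
    exact hp (hs₁ (hgsupp (Function.mem_support.mpr h)))
  have hxa : ∀ y : ℝ, ((a, y) : ℝ × ℝ) ∉ Ω ∧ ((-a, y) : ℝ × ℝ) ∉ Ω := fun y =>
    ⟨fun h => lt_irrefl a h.1.2, fun h => lt_irrefl (-a) h.1.1⟩
  have hyε : ∀ x : ℝ, ((x, ε) : ℝ × ℝ) ∉ Ω ∧ ((x, -ε) : ℝ × ℝ) ∉ Ω := fun x =>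
    ⟨fun h => lt_irrefl ε h.2.2, fun h => lt_irrefl (-ε) h.2.1⟩
  -- integrability of continuous functions on Ω
  have hInt : ∀ F : ℝ × ℝ → ℝ, Continuous F → IntegrableOn F Ω volume := by
    intro F hF
    have h1 : IntegrableOn F (Set.Icc (-a) a ×ˢ Set.Icc (-ε) ε) volume :=
      hF.continuousOn.integrableOn_compact (isCompact_Icc.prod isCompact_Icc)
    exact h1.mono_set (Set.prod_mono Set.Ioo_subset_Icc_self Set.Ioo_subset_Icc_self)
  -- Fubini helpers
  have hFub1 : ∀ F : ℝ × ℝ → ℝ, IntegrableOn F Ω volume →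
      ∫ p in Ω, F p = ∫ x in s, ∫ y in t, F (x, y) := by
    intro F hF
    rw [Measure.volume_eq_prod ℝ ℝ] at hF ⊢
    exact setIntegral_prod F hF
  have hFub2 : ∀ F : ℝ × ℝ → ℝ, IntegrableOn F Ω volume →
      ∫ p in Ω, F p = ∫ y in t, ∫ x in s, F (x, y) := by
    intro F hF
    rw [Measure.volume_eq_prod ℝ ℝ] at hF ⊢
    have h2 : Integrable F (((volume : Measure ℝ).restrict s).prod
        ((volume : Measure ℝ).restrict t)) := by
      rw [Measure.prod_restrict]; exact hF
    have h3 := integral_prod_symm F h2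
    rw [Measure.prod_restrict] at h3
    exact h3
  -- Ioo to interval integral
  have hIooa : ∀ φ : ℝ → ℝ, ∫ z in s, φ z = ∫ z in (-a)..a, φ z := by
    intro φ
    rw [intervalIntegral.integral_of_le (by linarith), hs_def,
      integral_Ioc_eq_integral_Ioo]
  have hIooε : ∀ φ : ℝ → ℝ, ∫ z in t, φ z = ∫ z in (-ε)..ε, φ z := by
    intro φ
    rw [intervalIntegral.integral_of_le (by linarith), ht_def,
      integral_Ioc_eq_integral_Ioo]
  -- partial derivatives as 1D derivatives
  have hDeriv₂f₁ : ∀ x y : ℝ, HasDerivAt (fun z => f₁ (x, z)) (g (x, y)) y := fun x y =>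
    (hdf₁ (x, y)).hasFDerivAt.comp_hasDerivAt y
      ((hasDerivAt_const y x).prodMk (hasDerivAt_id y))
  have hDeriv₂f₂ : ∀ x y : ℝ, HasDerivAt (fun z => f₂ (x, z)) (d₂ (x, y)) y := fun x y =>
    (hdf₂ (x, y)).hasFDerivAt.comp_hasDerivAt y
      ((hasDerivAt_const y x).prodMk (hasDerivAt_id y))
  have hDeriv₂g : ∀ x y : ℝ, HasDerivAt (fun z => g (x, z)) (D (x, y)) y := fun x y =>
    (hdg (x, y)).hasFDerivAt.comp_hasDerivAt y
      ((hasDerivAt_const y x).prodMk (hasDerivAt_id y))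
  have hDeriv₁f₁ : ∀ x y : ℝ, HasDerivAt (fun z => f₁ (z, y)) (d₁ (x, y)) x := fun x y =>
    (hdf₁ (x, y)).hasFDerivAt.comp_hasDerivAt x
      ((hasDerivAt_id x).prodMk (hasDerivAt_const x y))
  -- Step E1 : ∫ p.1 * d₂ p = 0
  have E1 : ∫ p in Ω, p.1 * d₂ p = 0 := by
    rw [hFub1 (fun p => p.1 * d₂ p) (hInt _ (continuous_fst.mul hcont_d₂))]
    have inner : ∀ x : ℝ, (∫ y in t, x * d₂ (x, y)) = 0 := by
      intro x
      rw [hIooε fun y => x * d₂ (x, y), intervalIntegral.integral_const_mul]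
      have h1 : ∫ y in (-ε)..ε, d₂ (x, y) = f₂ (x, ε) - f₂ (x, -ε) :=
        intervalIntegral.integral_eq_sub_of_hasDerivAt (fun y _ => hDeriv₂f₂ x y)
          ((hcont_d₂.comp (continuous_const.prodMk continuous_id)).intervalIntegrable _ _)
      rw [h1, hf₂z _ (hyε x).1, hf₂z _ (hyε x).2, sub_zero, mul_zero]
    simp only [inner, integral_zero]
  -- Step E2 : ∫ p.1 * d₁ p = - ∫ f₁
  have E2 : ∫ p in Ω, p.1 * d₁ p = - ∫ p in Ω, f₁ p := by
    rw [hFub2 (fun p => p.1 * d₁ p) (hInt _ (continuous_fst.mul hcont_d₁)), hFub2 _ (hInt _ hf₁.continuous)]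
    rw [← integral_neg]
    apply integral_congr_ae
    apply Filter.Eventually.of_forall
    intro y
    show (∫ x in s, (x, y).1 * d₁ (x, y)) = -∫ x in s, f₁ (x, y)
    simp only [Prod.fst]
    rw [hIooa fun x => x * d₁ (x, y), hIooa fun x => f₁ (x, y)]
    have hIBP := intervalIntegral.integral_mul_deriv_eq_deriv_mul
      (u := fun x : ℝ => x) (u' := fun _ => (1:ℝ)) (v := fun x => f₁ (x, y))
      (v' := fun x => d₁ (x, y)) (a := -a) (b := a)
      (fun x _ => hasDerivAt_id x) (fun x _ => hDeriv₁f₁ x y)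
      (intervalIntegrable_const)
      ((hcont_d₁.comp (continuous_id.prodMk continuous_const)).intervalIntegrable _ _)
    simp only [hf₁z _ (hxa y).1, hf₁z _ (hxa y).2, mul_zero, sub_zero, zero_sub,
      one_mul] at hIBP
    rw [hIBP]
  -- Step E3 : ∫ f₁ = (1/2) ∫ p.2^2 * D p
  have E3 : ∫ p in Ω, f₁ p = (1/2) * ∫ p in Ω, p.2^2 * D p := by
    rw [hFub1 _ (hInt _ hf₁.continuous),
      hFub1 (fun p => p.2^2 * D p) (hInt _ ((continuous_snd.pow 2).mul hcont_D)), ← integral_const_mul]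
    apply integral_congr_ae
    apply Filter.Eventually.of_forall
    intro x
    show (∫ y in t, f₁ (x, y)) = 1/2 * ∫ y in t, (x, y).2^2 * D (x, y)
    simp only [Prod.snd]
    rw [hIooε fun y => f₁ (x, y), hIooε fun y => y^2 * D (x, y)]
    have hg_int : IntervalIntegrable (fun z => g (x, z)) volume (-ε) ε :=
      (hcont_g.comp (continuous_const.prodMk continuous_id)).intervalIntegrable _ _
    have hD_int : IntervalIntegrable (fun z => D (x, z)) volume (-ε) ε :=
      (hcont_D.comp (continuous_const.prodMk continuous_id)).intervalIntegrable _ _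
    have hf₁_int : IntervalIntegrable (fun z => f₁ (x, z)) volume (-ε) ε :=
      (hf₁.continuous.comp (continuous_const.prodMk continuous_id)).intervalIntegrable _ _
    -- first IBP
    have hIBP1 := intervalIntegral.integral_mul_deriv_eq_deriv_mul
      (u := fun y : ℝ => y) (u' := fun _ => (1:ℝ)) (v := fun y => f₁ (x, y))
      (v' := fun y => g (x, y)) (a := -ε) (b := ε)
      (fun y _ => hasDerivAt_id y) (fun y _ => hDeriv₂f₁ x y)
      intervalIntegrable_const hg_int
    simp only [hf₁z _ (hyε x).1, hf₁z _ (hyε x).2, mul_zero, sub_zero, zero_sub,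
      one_mul] at hIBP1
    -- second IBP
    have hIBP2 := intervalIntegral.integral_mul_deriv_eq_deriv_mul
      (u := fun y : ℝ => y^2/2) (u' := fun y => y) (v := fun y => g (x, y))
      (v' := fun y => D (x, y)) (a := -ε) (b := ε)
      (fun y _ => by simpa using (hasDerivAt_pow 2 y).div_const 2)
      (fun y _ => hDeriv₂g x y)
      ((continuous_id.intervalIntegrable _ _)) hD_int
    simp only [hgz _ (hyε x).1, hgz _ (hyε x).2, mul_zero, sub_zero, zero_sub] at hIBP2
    have key : ∫ y in (-ε)..ε, y^2 * D (x, y) = 2 * ∫ y in (-ε)..ε, (y^2/2) * D (x, y) := by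
      rw [← intervalIntegral.integral_const_mul]
      apply intervalIntegral.integral_congr
      intro y _
      ring
    rw [key, hIBP2, hIBP1]
    ring
  -- combine for part 1
  have part1 : (∫ p in Ω, p.1^2) = -(1/2) * ∫ p in Ω, p.2^2 * D p := by
    have hcongr : (∫ p in Ω, p.1^2) = ∫ p in Ω, (p.1 * d₁ p + p.1 * d₂ p) := by
      apply setIntegral_congr_fun hΩmeas
      intro p hp
      have := hdiv p hp
      simp only [← hd₁_def, ← hd₂_def] at this ⊢
      rw [← mul_add, this]
      ring
    rw [hcongr, integral_add (f := fun p => p.1 * d₁ p) (g := fun p => p.1 * d₂ p)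
      (hInt _ (continuous_fst.mul hcont_d₁))
      (hInt _ (continuous_fst.mul hcont_d₂)), E1, E2, add_zero, E3]
    ring
  refine ⟨part1, ?_⟩
  -- part 2: Cauchy-Schwarz
  haveI hfin : IsFiniteMeasure (volume.restrict Ω) := by
    constructor
    rw [Measure.restrict_apply_univ]
    exact lt_of_le_of_lt
      (measure_mono (Set.prod_mono Set.Ioo_subset_Icc_self Set.Ioo_subset_Icc_self))
      (IsCompact.measure_lt_top (isCompact_Icc.prod isCompact_Icc))
  have hcsD : HasCompactSupport D := by
    apply HasCompactSupport.of_support_subset_isCompact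
      (K := Set.Icc (-a) a ×ˢ Set.Icc (-ε) ε) (isCompact_Icc.prod isCompact_Icc)
    exact hDsupp.trans (hs₁.trans
      (Set.prod_mono Set.Ioo_subset_Icc_self Set.Ioo_subset_Icc_self))
  have memf : MemLp (fun p : ℝ × ℝ => p.2^2) (ENNReal.ofReal 2) (volume.restrict Ω) := by
    apply MemLp.of_bound ((continuous_snd.pow 2).aestronglyMeasurable) (ε^2)
    filter_upwards [ae_restrict_mem hΩmeas] with p hp
    have h1 : |p.2| ≤ ε := le_of_lt (abs_lt.mpr ⟨hp.2.1, hp.2.2⟩)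
    have : ‖p.2^2‖ = |p.2|^2 := by rw [Real.norm_eq_abs, ← abs_pow, abs_pow]
    show ‖p.2^2‖ ≤ ε^2
    rw [this]
    exact pow_le_pow_left₀ (abs_nonneg _) h1 2
  have memD : MemLp D (ENNReal.ofReal 2) (volume.restrict Ω) :=
    hcont_D.memLp_of_hasCompactSupport hcsD
  have hCS := integral_mul_norm_le_Lp_mul_Lq (μ := volume.restrict Ω)
    Real.HolderConjugate.two_two memf memD
  -- convert norms
  have hpow1 : ∫ p in Ω, ‖(fun p : ℝ × ℝ => p.2^2) p‖ ^ (2:ℝ) ∂volume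
      = ∫ p in Ω, (p.2^2)^2 := by
    apply integral_congr_ae
    apply Filter.Eventually.of_forall
    intro p
    show ‖p.2^2‖ ^ (2:ℝ) = (p.2^2)^2
    rw [show ((2:ℝ)) = ((2:ℕ):ℝ) by norm_num, Real.rpow_natCast, Real.norm_eq_abs, sq_abs]
  have hpow2 : ∫ p in Ω, ‖D p‖ ^ (2:ℝ) ∂volume = ∫ p in Ω, (D p)^2 := by
    apply integral_congr_ae
    apply Filter.Eventually.of_forall
    intro p
    show ‖D p‖ ^ (2:ℝ) = (D p)^2
    rw [show ((2:ℝ)) = ((2:ℕ):ℝ) by norm_num, Real.rpow_natCast, Real.norm_eq_abs, sq_abs]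
  rw [hpow1, hpow2] at hCS
  have hnn1 : (0:ℝ) ≤ ∫ p in Ω, (p.2^2)^2 := integral_nonneg fun p => sq_nonneg _
  have hnn2 : (0:ℝ) ≤ ∫ p in Ω, (D p)^2 := integral_nonneg fun p => sq_nonneg _
  rw [← Real.sqrt_eq_rpow, ← Real.sqrt_eq_rpow] at hCS
  -- bound the integral
  have hmono : -∫ p in Ω, p.2^2 * D p ≤ ∫ p in Ω, ‖(fun p : ℝ × ℝ => p.2^2) p‖ * ‖D p‖ := by
    rw [← integral_neg]
    apply integral_mono
    · exact ((hInt _ ((continuous_snd.pow 2).mul hcont_D))).neg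
    · exact hInt _ (((continuous_snd.pow 2).norm).mul hcont_D.norm)
    · intro p
      simp only [Real.norm_eq_abs, ← abs_mul]
      exact (neg_le_abs _)
  calc (∫ p in Ω, p.1^2) = (1/2) * (- ∫ p in Ω, p.2^2 * D p) := by rw [part1]; ring
    _ ≤ (1/2) * (Real.sqrt (∫ p in Ω, (p.2^2)^2) * Real.sqrt (∫ p in Ω, (D p)^2)) := by
        apply mul_le_mul_of_nonneg_left (le_trans hmono hCS) (by norm_num)
    _ = (1/2) * Real.sqrt (∫ p in Ω, (p.2^2)^2) * Real.sqrt (∫ p in Ω, (D p)^2) := by ring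

/-- Let `Ω_{a,ε} = (−a,a) × (−ε,ε) ⊂ ℝ²` and let
`u = (u₁,u₂) ∈ [H²₀(Ω_{a,ε})]²` (represented here by a `C²` vector field supported
in `Ω_{a,ε}`) satisfy `div u = x₁` on `Ω_{a,ε}`.  Then
`∫ x₁² = −½ ∫ x₂² ∂²_{x₂x₂}u₁`, and hence by Cauchy–Schwarz
`‖x₁‖² ≤ ½‖x₂²‖‖∂²_{x₂x₂}u₁‖`. -/
theorem statement11 (a ε : ℝ) (ha : 0 < a) (hε : 0 < ε)
    (u : ℝ × ℝ → ℝ × ℝ) (hreg : ContDiff ℝ 2 u)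
    (hsupp : tsupport u ⊆ Set.Ioo (-a) a ×ˢ Set.Ioo (-ε) ε)
    (hdiv : ∀ p ∈ (Set.Ioo (-a) a ×ˢ Set.Ioo (-ε) ε : Set (ℝ × ℝ)),
      fderiv ℝ (fun q => (u q).1) p ((1 : ℝ), (0 : ℝ))
        + fderiv ℝ (fun q => (u q).2) p ((0 : ℝ), (1 : ℝ)) = p.1) :
    (∫ p in (Set.Ioo (-a) a ×ˢ Set.Ioo (-ε) ε : Set (ℝ × ℝ)), p.1^2)
      = -(1/2) * ∫ p in (Set.Ioo (-a) a ×ˢ Set.Ioo (-ε) ε : Set (ℝ × ℝ)),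
          p.2^2 * fderiv ℝ (fun q => fderiv ℝ (fun r => (u r).1) q ((0:ℝ),(1:ℝ))) p ((0:ℝ),(1:ℝ))
    ∧ (∫ p in (Set.Ioo (-a) a ×ˢ Set.Ioo (-ε) ε : Set (ℝ × ℝ)), p.1^2)
      ≤ (1/2) * Real.sqrt (∫ p in (Set.Ioo (-a) a ×ˢ Set.Ioo (-ε) ε : Set (ℝ × ℝ)), (p.2^2)^2)
          * Real.sqrt (∫ p in (Set.Ioo (-a) a ×ˢ Set.Ioo (-ε) ε : Set (ℝ × ℝ)),
              (fderiv ℝ (fun q => fderiv ℝ (fun r => (u r).1) q ((0:ℝ),(1:ℝ))) p ((0:ℝ),(1:ℝ)))^2) := by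
  have h₁ : tsupport (fun q => (u q).1) ⊆ Set.Ioo (-a) a ×ˢ Set.Ioo (-ε) ε := by
    refine le_trans (closure_mono ?_) hsupp
    intro q hq
    simp only [Function.mem_support] at hq ⊢
    intro h0; exact hq (by rw [h0]; rfl)
  have h₂ : tsupport (fun q => (u q).2) ⊆ Set.Ioo (-a) a ×ˢ Set.Ioo (-ε) ε := by
    refine le_trans (closure_mono ?_) hsupp
    intro q hq
    simp only [Function.mem_support] at hq ⊢
    intro h0; exact hq (by rw [h0]; rfl)
  exact statement11_aux a ε ha hε _ _ (contDiff_fst.comp hreg) (contDiff_snd.comp hreg)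
    h₁ h₂ hdiv
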